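/- Let F̃ : ℤ² → ℝ³ be a non-degenerate discrete asymptotic net with Gauss map N, and fix n₀. Suppose all N(m,n₀) lie in a fixed 2-dimensional linear subspace Q with unit normal v. Then every edge vector F̃(m+1,n₀) - F̃(m,n₀) is parallel to v; hence the discrete curve m ↦ F̃(m,n₀) lies on a straight line with direction v. -/

import Mathlib

open Module

private lemma aux_coplanar (b : EuclideanSpace ℝ (Fin 3)) (hb : b ≠ 0)
    (p0 p1 p2 p3 : EuclideanSpace ℝ (Fin 3))
    (h1 : (inner ℝ b (p1 - p0) : ℝ) = 0)
    (h2 : (inner ℝ b (p2 - p0) : ℝ) = 0)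
    (h3 : (inner ℝ b (p3 - p0) : ℝ) = 0) :
    Coplanar ℝ ({p0, p1, p2, p3} : Set (EuclideanSpace ℝ (Fin 3))) := by
  set W := (ℝ ∙ b)ᗮ with hW_def
  have hmem : ∀ p ∈ ({p0, p1, p2, p3} : Set (EuclideanSpace ℝ (Fin 3))), p - p0 ∈ W := by
    intro p hp
    simp only [Set.mem_insert_iff, Set.mem_singleton_iff] at hp
    rcases hp with rfl | rfl | rfl | rfl
    · rw [sub_self]; exact W.zero_mem
    · exact Submodule.mem_orthogonal_singleton_iff_inner_right.mpr h1
    · exact Submodule.mem_orthogonal_singleton_iff_inner_right.mpr h2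
    · exact Submodule.mem_orthogonal_singleton_iff_inner_right.mpr h3
  have hle : vectorSpan ℝ ({p0, p1, p2, p3} : Set (EuclideanSpace ℝ (Fin 3))) ≤ W := by
    rw [vectorSpan_def]
    refine Submodule.span_le.mpr ?_
    rintro z ⟨p, hp, q, hq, rfl⟩
    show p -ᵥ q ∈ W
    have : p -ᵥ q = (p - p0) - (q - p0) := by
      rw [vsub_eq_sub]; abel
    rw [this]
    exact W.sub_mem (hmem p hp) (hmem q hq)
  have hWrank : finrank ℝ W = 2 := by
    have h := Submodule.finrank_add_finrank_orthogonal (ℝ ∙ b)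
    rw [finrank_span_singleton hb, finrank_euclideanSpace_fin] at h
    rw [hW_def]
    omega
  show Module.rank ℝ (vectorSpan ℝ ({p0, p1, p2, p3} : Set (EuclideanSpace ℝ (Fin 3)))) ≤ 2
  calc Module.rank ℝ (vectorSpan ℝ ({p0, p1, p2, p3} : Set (EuclideanSpace ℝ (Fin 3))))
      ≤ Module.rank ℝ W := Submodule.rank_mono hle
    _ = (finrank ℝ W : Cardinal) := (Module.finrank_eq_rank ℝ W).symm
    _ = 2 := by rw [hWrank]; norm_num

private lemma aux_span (a b v x : EuclideanSpace ℝ (Fin 3))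
    (hind : LinearIndependent ℝ ![a, b]) (hv : v ≠ 0)
    (hva : (inner ℝ a v : ℝ) = 0) (hvb : (inner ℝ b v : ℝ) = 0)
    (hxa : (inner ℝ a x : ℝ) = 0) (hxb : (inner ℝ b x : ℝ) = 0) :
    ∃ t : ℝ, x = t • v := by
  set K := (ℝ ∙ a) ⊔ (ℝ ∙ b) with hK_def
  have hK : finrank ℝ K = 2 := by
    have h1 : K = Submodule.span ℝ (Set.range ![a, b]) := by
      have hr : Set.range ![a, b] = {a, b} := by
        ext z
        simp [Fin.exists_fin_two, or_comm, eq_comm]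
      rw [hr, Submodule.span_insert, hK_def]
    rw [h1, finrank_span_eq_card hind]
    simp
  have horth : finrank ℝ Kᗮ = 1 := by
    have h := Submodule.finrank_add_finrank_orthogonal K
    rw [hK, finrank_euclideanSpace_fin] at h
    omega
  have hvK : v ∈ Kᗮ := by
    rw [hK_def, ← Submodule.inf_orthogonal]
    exact ⟨Submodule.mem_orthogonal_singleton_iff_inner_right.mpr hva,
      Submodule.mem_orthogonal_singleton_iff_inner_right.mpr hvb⟩
  have hxK : x ∈ Kᗮ := by
    rw [hK_def, ← Submodule.inf_orthogonal]
    exact ⟨Submodule.mem_orthogonal_singleton_iff_inner_right.mpr hxa,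
      Submodule.mem_orthogonal_singleton_iff_inner_right.mpr hxb⟩
  have hle : (ℝ ∙ v) ≤ Kᗮ := (Submodule.span_singleton_le_iff_mem _ _).mpr hvK
  have heq : (ℝ ∙ v) = Kᗮ :=
    Submodule.eq_of_le_of_finrank_eq hle (by rw [finrank_span_singleton hv, horth])
  rw [← heq] at hxK
  obtain ⟨t, ht⟩ := Submodule.mem_span_singleton.mp hxK
  exact ⟨t, ht.symm⟩

/-- If the Gauss map of a non-degenerate discrete asymptotic net along a row lies in a fixed
two-dimensional linear subspace (with unit normal `v`), then the corresponding discrete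
asymptotic line is a straight line with direction `v`. -/
theorem straight_asymptotic_line_of_gaussMap_great_circle
    (F N : ℤ × ℤ → EuclideanSpace ℝ (Fin 3))
    (hN : ∀ p, ‖N p‖ = 1)
    (htang : ∀ m n : ℤ,
      (inner ℝ (F (m + 1, n) - F (m, n)) (N (m, n)) : ℝ) = 0 ∧
      (inner ℝ (F (m - 1, n) - F (m, n)) (N (m, n)) : ℝ) = 0 ∧
      (inner ℝ (F (m, n + 1) - F (m, n)) (N (m, n)) : ℝ) = 0 ∧
      (inner ℝ (F (m, n - 1) - F (m, n)) (N (m, n)) : ℝ) = 0)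
    (hnondeg : ∀ m n : ℤ, ¬ Coplanar ℝ
      ({F (m, n), F (m + 1, n), F (m + 1, n + 1), F (m, n + 1)} :
        Set (EuclideanSpace ℝ (Fin 3))))
    (n₀ : ℤ) (v : EuclideanSpace ℝ (Fin 3)) (hv : ‖v‖ = 1)
    (hQ : ∀ m : ℤ, (inner ℝ (N (m, n₀)) v : ℝ) = 0) :
    ∀ m : ℤ, ∃ t : ℝ, F (m + 1, n₀) - F (m, n₀) = t • v := by
  intro m
  set a := N (m, n₀) with ha_def
  set b := N (m + 1, n₀) with hb_def
  have ha0 : a ≠ 0 := by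
    intro h
    have := hN (m, n₀)
    rw [← ha_def, h, norm_zero] at this
    norm_num at this
  have hb0 : b ≠ 0 := by
    intro h
    have := hN (m + 1, n₀)
    rw [← hb_def, h, norm_zero] at this
    norm_num at this
  have hv0 : v ≠ 0 := by
    intro h
    rw [h, norm_zero] at hv
    norm_num at hv
  -- the edge is orthogonal to a
  have hea : (inner ℝ a (F (m + 1, n₀) - F (m, n₀)) : ℝ) = 0 := by
    rw [real_inner_comm]; exact (htang m n₀).1
  -- the edge is orthogonal to b
  have heb : (inner ℝ b (F (m + 1, n₀) - F (m, n₀)) : ℝ) = 0 := by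
    have h := (htang (m + 1) n₀).2.1
    rw [show m + 1 - 1 = m from add_sub_cancel_right m 1] at h
    rw [real_inner_comm, show F (m + 1, n₀) - F (m, n₀) = -(F (m, n₀) - F (m + 1, n₀)) from
      (neg_sub _ _).symm, inner_neg_left, h, neg_zero]
  -- a and b are linearly independent
  have hind : LinearIndependent ℝ ![a, b] := by
    rw [linearIndependent_fin2]
    constructor
    · simpa using hb0
    · intro c hc
      simp only [Matrix.cons_val_one, Matrix.head_cons, Matrix.cons_val_zero] at hc
      have hc0 : c ≠ 0 := by
        intro h
        rw [h, zero_smul] at hc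
        exact ha0 hc.symm
      apply hnondeg m n₀
      apply aux_coplanar b hb0 (F (m, n₀)) (F (m + 1, n₀)) (F (m + 1, n₀ + 1)) (F (m, n₀ + 1))
        heb ?_ ?_
      · -- F (m+1, n₀+1) - F (m, n₀) ⟂ b
        have h1 : (inner ℝ b (F (m + 1, n₀ + 1) - F (m + 1, n₀)) : ℝ) = 0 := by
          rw [real_inner_comm]; exact (htang (m + 1) n₀).2.2.1
        have hsplit : F (m + 1, n₀ + 1) - F (m, n₀) =
            (F (m + 1, n₀ + 1) - F (m + 1, n₀)) + (F (m + 1, n₀) - F (m, n₀)) := by abel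
        rw [hsplit, inner_add_right, h1, heb, add_zero]
      · -- F (m, n₀+1) - F (m, n₀) ⟂ b
        have h1 : (inner ℝ (F (m, n₀ + 1) - F (m, n₀)) a : ℝ) = 0 := (htang m n₀).2.2.1
        rw [← hc, inner_smul_right] at h1
        rcases mul_eq_zero.mp h1 with h | h
        · exact absurd h hc0
        · rw [real_inner_comm]; exact h
  exact aux_span a b v _ hind hv0 (hQ m) (hQ (m + 1)) hea heb
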